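/- arXiv:2405.19272 — 5 statements merged into one kernel-verified Lean document; each statement's English description precedes it below -/
import Mathlib

section
/- Let α > 1, let P, Q be probability measures on a measurable space X with P ≪ Q, and let K, K' be Markov kernels from X to a measurable space Y such that for Q-almost every x, K(x) ≪ K'(x). Suppose ∫_X (dP/dQ)^α dQ ≤ exp((α−1)ε₁) and, for Q-almost every x, ∫_Y (dK(x)/dK'(x))^α dK'(x) ≤ exp((α−1)ε₂). Then the composed measures P ⊗ K and Q ⊗ K' on X × Y (defined by (P ⊗ K)(A × B) = ∫_A K(x)(B) dP(x)) satisfy P ⊗ K ≪ Q ⊗ K' and ∫_{X×Y} (d(P ⊗ K)/d(Q ⊗ K'))^α d(Q ⊗ K') ≤ exp((α−1)(ε₁ + ε₂)). -/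
open MeasureTheory ProbabilityTheory
open scoped ENNReal

/-- Adaptive composition of Rényi differential privacy (Proposition B.1, Mironov): if
`∫ (dP/dQ)^α dQ ≤ e^{(α−1)ε₁}` and, `Q`-a.e., `∫ (dK(x)/dK'(x))^α dK'(x) ≤ e^{(α−1)ε₂}`, then
the composed measures satisfy `P ⊗ K ≪ Q ⊗ K'` and
`∫ (d(P ⊗ K)/d(Q ⊗ K'))^α d(Q ⊗ K') ≤ e^{(α−1)(ε₁+ε₂)}`. -/
theorem renyi_adaptive_composition
    {X Y : Type*} [MeasurableSpace X] [MeasurableSpace Y]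
    (α : ℝ) (hα : 1 < α) (ε₁ ε₂ : ℝ)
    (P Q : Measure X) [IsProbabilityMeasure P] [IsProbabilityMeasure Q]
    (K K' : Kernel X Y) [IsMarkovKernel K] [IsMarkovKernel K']
    (hPQ : P ≪ Q) (hKK' : ∀ᵐ x ∂Q, K x ≪ K' x)
    (hP : ∫⁻ x, P.rnDeriv Q x ^ α ∂Q ≤ ENNReal.ofReal (Real.exp ((α - 1) * ε₁)))
    (hK : ∀ᵐ x ∂Q, ∫⁻ y, (K x).rnDeriv (K' x) y ^ α ∂(K' x)
        ≤ ENNReal.ofReal (Real.exp ((α - 1) * ε₂))) :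
    (P ⊗ₘ K) ≪ (Q ⊗ₘ K') ∧
    ∫⁻ z, (P ⊗ₘ K).rnDeriv (Q ⊗ₘ K') z ^ α ∂(Q ⊗ₘ K')
      ≤ ENNReal.ofReal (Real.exp ((α - 1) * (ε₁ + ε₂))) := by
  have hα0 : (0:ℝ) < α := lt_trans one_pos hα
  have hα1 : (0:ℝ) < α - 1 := sub_pos.2 hα
  set q : ℝ := α / (α - 1) with hqdef
  have hpq : α.HolderConjugate q := Real.HolderConjugate.conjExponent hα
  have hq0 : (0:ℝ) < q := hpq.symm.pos
  have hαq : (α - 1) * q = α := by rw [hqdef]; field_simp [hα1.ne']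
  set ν : Measure (X × Y) := Q ⊗ₘ K' with hνdef
  set μ : Measure (X × Y) := P ⊗ₘ K with hμdef
  have hAC : μ ≪ ν :=
    Measure.AbsolutelyContinuous.compProd hPQ (hKK'.filter_mono hPQ.ae_le)
  refine ⟨hAC, ?_⟩
  set f : X → ENNReal := P.rnDeriv Q with hfdef
  have hfm : Measurable f := Measure.measurable_rnDeriv _ _
  set ρ : X × Y → ENNReal := μ.rnDeriv ν with hρdef
  have hρm : Measurable ρ := Measure.measurable_rnDeriv _ _
  set C1 : ENNReal := ENNReal.ofReal (Real.exp ((α-1)*ε₁)) with hC1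
  set C2 : ENNReal := ENNReal.ofReal (Real.exp ((α-1)*ε₂)) with hC2
  have hCmul : ENNReal.ofReal (Real.exp ((α - 1) * (ε₁ + ε₂))) = C1 * C2 := by
    rw [hC1, hC2, ← ENNReal.ofReal_mul (Real.exp_nonneg _), ← Real.exp_add, ← mul_add]
  rw [hCmul]
  have hC1top : C1 ≠ ∞ := ENNReal.ofReal_ne_top
  have hC2top : C2 ≠ ∞ := ENNReal.ofReal_ne_top
  -- truncations
  set ρn : ℕ → X × Y → ENNReal := fun n z => min (ρ z) n with hρndef
  have hρnm : ∀ n, Measurable (ρn n) := fun n => hρm.min measurable_const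
  have key : ∀ n : ℕ, ∫⁻ z, ρn n z ^ α ∂ν ≤ C1 * C2 := by
    intro n
    set In := ∫⁻ z, ρn n z ^ α ∂ν with hIn
    have hIn_ne_top : In ≠ ∞ := by
      have hle : In ≤ (n : ENNReal) ^ α * ν Set.univ := by
        rw [← lintegral_const]
        exact lintegral_mono fun z =>
          ENNReal.rpow_le_rpow (min_le_right _ _) hα0.le
      refine ne_top_of_le_ne_top ?_ hle
      simp [ENNReal.rpow_ne_top_of_nonneg hα0.le (ENNReal.natCast_ne_top n)]
    have hmeas1 : Measurable fun z => ρn n z ^ (α - 1) := (hρnm n).pow_const _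
    have hmeasα : Measurable fun z => ρn n z ^ α := (hρnm n).pow_const _
    -- Step 1: In ≤ ∫ ρ * ρn^(α-1) dν
    have step1 : In ≤ ∫⁻ z, ρ z * ρn n z ^ (α - 1) ∂ν := by
      refine lintegral_mono fun z => ?_
      rcases eq_or_ne (ρn n z) 0 with h0 | h0
      · simp [h0, ENNReal.zero_rpow_of_pos hα0]
      · have htop : ρn n z ≠ ∞ :=
          ne_top_of_le_ne_top (ENNReal.natCast_ne_top n) (min_le_right _ _)
        calc ρn n z ^ α = ρn n z ^ (1 + (α - 1)) := by ring_nf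
          _ = ρn n z * ρn n z ^ (α - 1) := by
              rw [ENNReal.rpow_add _ _ h0 htop, ENNReal.rpow_one]
          _ ≤ ρ z * ρn n z ^ (α - 1) :=
              mul_le_mul_left (min_le_left _ _) _
    -- Step 2: change to μ
    have step2 : ∫⁻ z, ρ z * ρn n z ^ (α - 1) ∂ν = ∫⁻ z, ρn n z ^ (α - 1) ∂μ :=
      lintegral_rnDeriv_mul hAC hmeas1.aemeasurable
    -- Step 3: iterated integral over μ = P ⊗ₘ K
    have step3 : ∫⁻ z, ρn n z ^ (α - 1) ∂μ
        = ∫⁻ x, ∫⁻ y, ρn n (x, y) ^ (α - 1) ∂(K x) ∂P :=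
      Measure.lintegral_compProd hmeas1
    set G : X → ENNReal := fun x => ∫⁻ y, ρn n (x, y) ^ (α - 1) ∂(K x) with hGdef
    have hGm : Measurable G := hmeas1.lintegral_kernel_prod_right'
    have step4 : ∫⁻ x, G x ∂P = ∫⁻ x, f x * G x ∂Q :=
      (lintegral_rnDeriv_mul hPQ hGm.aemeasurable).symm
    set Sn : X → ENNReal := fun x => ∫⁻ y, ρn n (x, y) ^ α ∂(K' x) with hSndef
    have hSnm : Measurable Sn := hmeasα.lintegral_kernel_prod_right'
    -- Step 5: a.e. bound G x ≤ C2^(1/α) * Sn x^(1/q)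
    have hae : ∀ᵐ x ∂Q, G x ≤ C2 ^ (1/α) * Sn x ^ (1/q) := by
      filter_upwards [hKK', hK] with x hx hxK
      have hg : Measurable fun y => ρn n (x, y) ^ (α - 1) :=
        (hmeas1.comp (measurable_prodMk_left (m := inferInstance)))
      have h1 : G x = ∫⁻ y, (K x).rnDeriv (K' x) y * ρn n (x, y) ^ (α - 1) ∂(K' x) :=
        (lintegral_rnDeriv_mul hx hg.aemeasurable).symm
      rw [h1]
      calc ∫⁻ y, (K x).rnDeriv (K' x) y * ρn n (x, y) ^ (α - 1) ∂(K' x)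
          ≤ (∫⁻ y, (K x).rnDeriv (K' x) y ^ α ∂(K' x)) ^ (1/α) *
            (∫⁻ y, (ρn n (x, y) ^ (α - 1)) ^ q ∂(K' x)) ^ (1/q) :=
            ENNReal.lintegral_mul_le_Lp_mul_Lq _ hpq
              (Measure.measurable_rnDeriv _ _).aemeasurable hg.aemeasurable
        _ = (∫⁻ y, (K x).rnDeriv (K' x) y ^ α ∂(K' x)) ^ (1/α) * Sn x ^ (1/q) := by
            have heq : ∫⁻ y, (ρn n (x, y) ^ (α - 1)) ^ q ∂(K' x) = Sn x := by
              refine lintegral_congr fun y => ?_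
              rw [← ENNReal.rpow_mul, hαq]
            rw [heq]
        _ ≤ C2 ^ (1/α) * Sn x ^ (1/q) := by gcongr
    -- Step 6
    have hC2a : C2 ^ (1/α) ≠ ∞ := ENNReal.rpow_ne_top_of_nonneg (by positivity) hC2top
    have step6 : ∫⁻ x, f x * G x ∂Q ≤ C2 ^ (1/α) * ∫⁻ x, f x * Sn x ^ (1/q) ∂Q := by
      calc ∫⁻ x, f x * G x ∂Q
          ≤ ∫⁻ x, f x * (C2 ^ (1/α) * Sn x ^ (1/q)) ∂Q := by
            refine lintegral_mono_ae (hae.mono fun x hx => ?_)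
            exact mul_le_mul_right hx _
        _ = C2 ^ (1/α) * ∫⁻ x, f x * Sn x ^ (1/q) ∂Q := by
            rw [← lintegral_const_mul' _ _ hC2a]
            refine lintegral_congr fun x => ?_
            ring
    -- Step 7: outer Hölder
    have hSQ : ∫⁻ x, Sn x ∂Q = In := (Measure.lintegral_compProd hmeasα).symm
    have step7 : ∫⁻ x, f x * Sn x ^ (1/q) ∂Q ≤ C1 ^ (1/α) * In ^ (1/q) := by
      calc ∫⁻ x, f x * Sn x ^ (1/q) ∂Q
          ≤ (∫⁻ x, f x ^ α ∂Q) ^ (1/α) * (∫⁻ x, (Sn x ^ (1/q)) ^ q ∂Q) ^ (1/q) :=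
            ENNReal.lintegral_mul_le_Lp_mul_Lq _ hpq hfm.aemeasurable
              (hSnm.pow_const _).aemeasurable
        _ = (∫⁻ x, f x ^ α ∂Q) ^ (1/α) * In ^ (1/q) := by
            have heq : ∫⁻ x, (Sn x ^ (1/q)) ^ q ∂Q = In := by
              rw [← hSQ]
              refine lintegral_congr fun x => ?_
              rw [← ENNReal.rpow_mul, one_div, inv_mul_cancel₀ hq0.ne', ENNReal.rpow_one]
            rw [heq]
        _ ≤ C1 ^ (1/α) * In ^ (1/q) := by gcongr
    -- combine
    have hmain : In ≤ (C1 * C2) ^ (1/α) * In ^ (1/q) := by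
      have := le_trans (le_trans step1 (step2.trans_le (step3.trans_le
        (step4.trans_le (step6.trans (mul_le_mul_right step7 _)))))) le_rfl
      calc In ≤ C2 ^ (1/α) * (C1 ^ (1/α) * In ^ (1/q)) := this
        _ = (C1 * C2) ^ (1/α) * In ^ (1/q) := by
            rw [ENNReal.mul_rpow_of_nonneg _ _ (by positivity : (0:ℝ) ≤ 1/α)]
            ring
    rcases eq_or_ne In 0 with h0 | h0
    · simp [h0]
    · have hq_ne0 : In ^ (1/q) ≠ 0 := by
        simp [ENNReal.rpow_eq_zero_iff, h0, hIn_ne_top, hq0, one_div,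
          inv_pos.mpr hq0]
      have hq_ne_top : In ^ (1/q) ≠ ∞ :=
        ENNReal.rpow_ne_top_of_nonneg (by positivity) hIn_ne_top
      have hsplit : In = In ^ (1/α) * In ^ (1/q) := by
        rw [← ENNReal.rpow_add _ _ h0 hIn_ne_top,
          show 1/α + 1/q = 1 by rw [one_div, one_div]; exact hpq.inv_add_inv_eq_one,
          ENNReal.rpow_one]
      have hcancel : In ^ (1/α) ≤ (C1 * C2) ^ (1/α) := by
        rw [← ENNReal.mul_le_mul_iff_left hq_ne0 hq_ne_top, ← hsplit]
        exact hmain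
      calc In = (In ^ (1/α)) ^ α := by
            rw [← ENNReal.rpow_mul, one_div, inv_mul_cancel₀ hα0.ne', ENNReal.rpow_one]
        _ ≤ ((C1 * C2) ^ (1/α)) ^ α := ENNReal.rpow_le_rpow hcancel hα0.le
        _ = C1 * C2 := by
            rw [← ENNReal.rpow_mul, one_div, inv_mul_cancel₀ hα0.ne', ENNReal.rpow_one]
  -- pass to the limit
  have hρ_lt : ∀ᵐ z ∂ν, ρ z < ∞ := Measure.rnDeriv_lt_top μ ν
  have hcongr : ∫⁻ z, ρ z ^ α ∂ν = ∫⁻ z, ⨆ n : ℕ, ρn n z ^ α ∂ν := by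
    refine lintegral_congr_ae ?_
    filter_upwards [hρ_lt] with z hz
    have hsup : ⨆ n : ℕ, ρn n z ^ α = ρ z ^ α := by
      refine le_antisymm (iSup_le fun m => ENNReal.rpow_le_rpow (min_le_left _ _) hα0.le) ?_
      have hle : ρ z ≤ (⌈(ρ z).toReal⌉₊ : ENNReal) :=
        calc ρ z = ENNReal.ofReal (ρ z).toReal := (ENNReal.ofReal_toReal hz.ne).symm
          _ ≤ ENNReal.ofReal (⌈(ρ z).toReal⌉₊ : ℝ) :=
              ENNReal.ofReal_le_ofReal (Nat.le_ceil _)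
          _ = (⌈(ρ z).toReal⌉₊ : ENNReal) := ENNReal.ofReal_natCast _
      refine le_iSup_of_le ⌈(ρ z).toReal⌉₊ ?_
      rw [hρndef]
      simp only [min_eq_left hle]
      exact le_rfl
    rw [hsup]
  rw [hcongr]
  have hmono : Monotone fun (n : ℕ) (z : X × Y) => ρn n z ^ α := by
    intro m k hmk z
    exact ENNReal.rpow_le_rpow (min_le_min le_rfl (by exact_mod_cast hmk)) hα0.le
  rw [lintegral_iSup (fun n => (hρnm n).pow_const _) hmono]
  exact iSup_le key
end

section
/- Let α > 1, ε ≥ 0, and let P, Q be probability measures on a measurable space with P ≪ Q such that ∫ (dP/dQ)^α dQ ≤ exp((α−1)ε). Then for every δ with 0 < δ < 1 and αδ ≤ 1, and every measurable set S: P(S) ≤ exp( ε + log(1/(αδ))/(α−1) + log(1 − 1/α) ) · Q(S) + δ. -/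
open MeasureTheory

/-- Young-inequality-based pointwise bound: for `u ≥ 0`,
`u ≤ exp(ε') + δ e^{(1−α)ε} u^α` where `ε'` is the target approximate-DP epsilon. -/
lemma young_aux (α ε δ : ℝ) (hα : 1 < α) (hδ0 : 0 < δ) (u : ℝ) (hu : 0 ≤ u) :
    u ≤ Real.exp (ε + Real.log (1/(α*δ))/(α-1) + Real.log (1-1/α))
      + δ * Real.exp ((1-α)*ε) * u ^ α := by
  have hα0 : (0:ℝ) < α := by linarith
  have hα1 : (0:ℝ) < α - 1 := by linarith
  set q : ℝ := α / (α - 1) with hqdef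
  have hpq : α.HolderConjugate q := Real.HolderConjugate.conjExponent hα
  have hq0 : 0 < q := div_pos hα0 hα1
  set z : ℝ := α * δ * Real.exp ((1-α)*ε) with hzdef
  have hz : 0 < z := by positivity
  set t : ℝ := z ^ (1/α) with htdef
  have ht : 0 < t := Real.rpow_pos_of_pos hz _
  have key := Real.young_inequality_of_nonneg (mul_nonneg ht.le hu)
    (inv_pos.2 ht).le hpq
  have h1 : (t*u)*t⁻¹ = u := by field_simp
  have htα : t ^ α = z := by
    rw [htdef, ← Real.rpow_mul hz.le, one_div, inv_mul_cancel₀ hα0.ne', Real.rpow_one]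
  have h2 : (t*u)^α/α = δ * Real.exp ((1-α)*ε) * u^α := by
    rw [Real.mul_rpow ht.le hu, htα, hzdef]
    field_simp
  have hlogt : Real.log t = (Real.log α + Real.log δ + (1-α)*ε) / α := by
    rw [htdef, Real.log_rpow hz, hzdef, Real.log_mul (by positivity) (Real.exp_pos _).ne',
      Real.log_mul hα0.ne' hδ0.ne', Real.log_exp]
    ring
  have h3 : t⁻¹ ^ q / q = Real.exp (ε + Real.log (1/(α*δ))/(α-1) + Real.log (1-1/α)) := by
    have hL : 0 < t⁻¹ ^ q / q := by positivity
    rw [← Real.exp_log hL]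
    congr 1
    rw [Real.log_div (by positivity) hq0.ne', Real.log_rpow (inv_pos.2 ht), Real.log_inv,
      hlogt, hqdef, Real.log_div hα0.ne' hα1.ne',
      Real.log_div one_ne_zero (by positivity : α * δ ≠ 0),
      Real.log_mul hα0.ne' hδ0.ne', Real.log_one]
    have h1a : (1 : ℝ) - 1/α = (α-1)/α := by field_simp
    rw [h1a, Real.log_div hα1.ne' hα0.ne']
    field_simp
    ring
  calc u = (t*u)*t⁻¹ := h1.symm
    _ ≤ (t*u)^α/α + t⁻¹^q/q := key
    _ = Real.exp (ε + Real.log (1/(α*δ))/(α-1) + Real.log (1-1/α))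
        + δ * Real.exp ((1-α)*ε) * u ^ α := by rw [h2, h3]; ring

/-- Conversion from Rényi DP to approximate DP (Lemma B.2): if
`∫ (dP/dQ)^α dQ ≤ e^{(α−1)ε}` (i.e. `D_α(P‖Q) ≤ ε`), then for every `0 < δ < 1` with
`αδ ≤ 1` and every measurable `S`,
`P(S) ≤ exp(ε + log(1/(αδ))/(α−1) + log(1 − 1/α)) · Q(S) + δ`. -/
theorem rdp_to_approx_dp
    {X : Type*} [MeasurableSpace X]
    (α : ℝ) (hα : 1 < α) (ε : ℝ) (hε : 0 ≤ ε)
    (P Q : Measure X) [IsProbabilityMeasure P] [IsProbabilityMeasure Q]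
    (hPQ : P ≪ Q)
    (h : ∫⁻ x, P.rnDeriv Q x ^ α ∂Q ≤ ENNReal.ofReal (Real.exp ((α - 1) * ε)))
    (δ : ℝ) (hδ0 : 0 < δ) (hδ1 : δ < 1) (hαδ : α * δ ≤ 1)
    (S : Set X) (hS : MeasurableSet S) :
    P S ≤ ENNReal.ofReal
        (Real.exp (ε + Real.log (1 / (α * δ)) / (α - 1) + Real.log (1 - 1 / α))) * Q S
      + ENNReal.ofReal δ := by
  set f := P.rnDeriv Q with hf
  set C : ℝ := Real.exp (ε + Real.log (1/(α*δ))/(α-1) + Real.log (1-1/α)) with hC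
  set K : ℝ := δ * Real.exp ((1-α)*ε) with hK
  have hK0 : 0 ≤ K := by positivity
  have hmf : Measurable f := Measure.measurable_rnDeriv P Q
  have hmfα : Measurable fun x => f x ^ α := hmf.pow_const α
  -- pointwise bound a.e.
  have hae : ∀ᵐ x ∂Q, f x ≤ ENNReal.ofReal C + ENNReal.ofReal K * f x ^ α := by
    filter_upwards [Measure.rnDeriv_lt_top P Q] with x hx
    have hxu : f x = ENNReal.ofReal (f x).toReal := (ENNReal.ofReal_toReal hx.ne).symm
    rw [hxu, ENNReal.ofReal_rpow_of_nonneg ENNReal.toReal_nonneg (by linarith : (0:ℝ) ≤ α),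
      ← ENNReal.ofReal_mul hK0, ← ENNReal.ofReal_add (by positivity) (by positivity)]
    exact ENNReal.ofReal_le_ofReal
      (young_aux α ε δ hα hδ0 _ ENNReal.toReal_nonneg)
  have hPS : P S = ∫⁻ x in S, f x ∂Q := (Measure.setLIntegral_rnDeriv hPQ S).symm
  have hKint : ENNReal.ofReal K * ∫⁻ x, f x ^ α ∂Q ≤ ENNReal.ofReal δ := by
    calc ENNReal.ofReal K * ∫⁻ x, f x ^ α ∂Q
        ≤ ENNReal.ofReal K * ENNReal.ofReal (Real.exp ((α - 1) * ε)) :=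
          mul_le_mul_right h _
      _ = ENNReal.ofReal (K * Real.exp ((α-1)*ε)) :=
          (ENNReal.ofReal_mul hK0).symm
      _ = ENNReal.ofReal δ := by
          rw [hK, mul_assoc, ← Real.exp_add]
          ring_nf
          simp
  calc P S = ∫⁻ x in S, f x ∂Q := hPS
    _ ≤ ∫⁻ x in S, (ENNReal.ofReal C + ENNReal.ofReal K * f x ^ α) ∂Q :=
        lintegral_mono_ae (ae_restrict_of_ae hae)
    _ = ENNReal.ofReal C * Q S + ENNReal.ofReal K * ∫⁻ x in S, f x ^ α ∂Q := by
        rw [lintegral_add_left measurable_const, lintegral_const,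
          lintegral_const_mul _ hmfα, Measure.restrict_apply_univ]
    _ ≤ ENNReal.ofReal C * Q S + ENNReal.ofReal K * ∫⁻ x, f x ^ α ∂Q := by
        gcongr
        exact Measure.restrict_le_self
    _ ≤ ENNReal.ofReal C * Q S + ENNReal.ofReal δ := by gcongr
end

section
/- Let T ≥ 1 be a natural number, c > 0, σ > 0, and let μ, μ' : {1,…,T} → ℝ satisfy |μ_t − μ'_t| ≤ c for all t. Let P = ⊗_{t=1}^T N(μ_t, σ²) and Q = ⊗_{t=1}^T N(μ'_t, σ²) be the corresponding product Gaussian measures on ℝ^T. Then for every real α > 1, every δ ∈ (0,1), and every measurable set S ⊆ ℝ^T: P(S) ≤ exp( T·α·c²/(2σ²) + log(1/δ)/(α−1) ) · Q(S) + δ. -/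
open MeasureTheory ProbabilityTheory
open scoped ENNReal

private lemma lintegral_pi_prod' {n : ℕ} (ν : Fin n → Measure ℝ) [∀ i, SigmaFinite (ν i)]
    (f : Fin n → ℝ → ℝ≥0∞) (hf : ∀ i, Measurable (f i)) :
    ∫⁻ x, ∏ i, f i (x i) ∂Measure.pi ν = ∏ i, ∫⁻ y, f i y ∂ν i := by
  induction n with
  | zero => simp [lintegral_one, Measure.pi_univ]
  | succ n ih =>
    have hmeas : Measurable fun p : ℝ × (Fin n → ℝ) =>
        f 0 p.1 * ∏ i : Fin n, f i.succ (p.2 i) :=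
      ((hf 0).comp measurable_fst).mul
        (Finset.measurable_prod _ fun i _ =>
          (hf i.succ).comp ((measurable_pi_apply i).comp measurable_snd))
    have key : ∫⁻ x, ∏ i, f i (x i) ∂Measure.pi ν =
        ∫⁻ p : ℝ × (Fin n → ℝ), f 0 p.1 * ∏ i : Fin n, f i.succ (p.2 i)
          ∂((ν 0).prod (Measure.pi fun j => ν ((0 : Fin (n+1)).succAbove j))) := by
      rw [← (measurePreserving_piFinSuccAbove ν 0).lintegral_comp hmeas]
      congr 1
      funext x
      simp [MeasurableEquiv.piFinSuccAbove, Fin.prod_univ_succ, Fin.succAbove_zero, Fin.tail]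
    rw [key, lintegral_prod _ hmeas.aemeasurable]
    simp only [Fin.succAbove_zero]
    haveI : ∀ i : Fin n, SigmaFinite ((fun j : Fin n => ν j.succ) i) :=
      fun i => inferInstanceAs (SigmaFinite (ν i.succ))
    calc ∫⁻ y, ∫⁻ z, f 0 y * ∏ i : Fin n, f i.succ (z i)
            ∂(Measure.pi fun j : Fin n => ν j.succ) ∂ν 0
        = ∫⁻ y, f 0 y * ∫⁻ z, ∏ i : Fin n, f i.succ (z i)
            ∂(Measure.pi fun j : Fin n => ν j.succ) ∂ν 0 := by
          congr 1; funext y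
          rw [lintegral_const_mul _ (Finset.measurable_prod _ fun i _ =>
            (hf i.succ).comp (measurable_pi_apply i))]
      _ = ∫⁻ y, f 0 y * ∏ i : Fin n, ∫⁻ z, f i.succ z ∂ν i.succ ∂ν 0 := by
          simp_rw [ih (fun j => ν j.succ) (fun j => f j.succ) (fun j => hf j.succ)]
      _ = (∫⁻ y, f 0 y ∂ν 0) * ∏ i : Fin n, ∫⁻ z, f i.succ z ∂ν i.succ := by
          rw [lintegral_mul_const _ (hf 0)]
      _ = ∏ i, ∫⁻ y, f i y ∂ν i := by rw [Fin.prod_univ_succ]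

private lemma pi_withDensity' {n : ℕ} (ν : Fin n → Measure ℝ) [∀ i, SigmaFinite (ν i)]
    (f : Fin n → ℝ → ℝ≥0∞) (hf : ∀ i, Measurable (f i))
    [∀ i, SigmaFinite ((ν i).withDensity (f i))] :
    Measure.pi (fun i => (ν i).withDensity (f i)) =
      (Measure.pi ν).withDensity (fun x => ∏ i, f i (x i)) := by
  refine Measure.pi_eq fun s hs => ?_
  rw [withDensity_apply _ (MeasurableSet.univ_pi hs)]
  have hind : ∀ x : Fin n → ℝ,
      (Set.pi Set.univ s).indicator (fun x => ∏ i, f i (x i)) x =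
        ∏ i, (s i).indicator (f i) (x i) := by
    intro x
    by_cases hx : x ∈ Set.pi Set.univ s
    · rw [Set.indicator_of_mem hx]
      exact Finset.prod_congr rfl fun i _ =>
        (Set.indicator_of_mem (hx i (Set.mem_univ i)) _).symm
    · rw [Set.indicator_of_notMem hx]
      obtain ⟨i, hi⟩ : ∃ i, x i ∉ s i := by
        by_contra h
        push_neg at h
        exact hx fun i _ => h i
      exact (Finset.prod_eq_zero (Finset.mem_univ i)
        (by rw [Set.indicator_of_notMem hi])).symm
  rw [← lintegral_indicator (MeasurableSet.univ_pi hs)]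
  simp_rw [hind]
  rw [lintegral_pi_prod' ν _ (fun i => (hf i).indicator (hs i))]
  exact Finset.prod_congr rfl fun i _ => by
    rw [lintegral_indicator (hs i), withDensity_apply _ (hs i)]

private lemma gauss_ratio' (σ : ℝ) (hσ : 0 < σ) (a b : ℝ) :
    gaussianReal a ⟨σ ^ 2, sq_nonneg σ⟩ =
      (gaussianReal b ⟨σ ^ 2, sq_nonneg σ⟩).withDensity
        (fun x => ENNReal.ofReal
          (Real.exp (((x - b) ^ 2 - (x - a) ^ 2) / (2 * σ ^ 2)))) := by
  have hσ2 : (0:ℝ) < σ ^ 2 := by positivity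
  have hv : (⟨σ ^ 2, sq_nonneg σ⟩ : NNReal) ≠ 0 := by
    intro h
    exact hσ2.ne' (congrArg NNReal.toReal h)
  have hmr : Measurable fun x : ℝ =>
      ENNReal.ofReal (Real.exp (((x - b) ^ 2 - (x - a) ^ 2) / (2 * σ ^ 2))) := by
    fun_prop
  rw [gaussianReal_of_var_ne_zero a hv, gaussianReal_of_var_ne_zero b hv,
    ← withDensity_mul _ (measurable_gaussianPDF b (⟨σ ^ 2, sq_nonneg σ⟩ : NNReal)) hmr]
  congr 1
  funext x
  simp only [Pi.mul_apply, gaussianPDF]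
  rw [← ENNReal.ofReal_mul (gaussianPDFReal_nonneg _ (⟨σ ^ 2, sq_nonneg σ⟩ : NNReal) _)]
  congr 1
  simp only [gaussianPDFReal]
  erw [NNReal.coe_mk]
  conv_rhs => rw [mul_assoc, ← Real.exp_add, ← add_div]
  congr 1
  ring_nf

private lemma lintegral_exp_gauss' (σ : ℝ) (hσ : 0 < σ) (m s b : ℝ) :
    ∫⁻ x, ENNReal.ofReal (Real.exp (s * x + b)) ∂gaussianReal m ⟨σ ^ 2, sq_nonneg σ⟩ =
      ENNReal.ofReal (Real.exp (s * m + σ ^ 2 * s ^ 2 / 2 + b)) := by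
  have hσ2 : (0:ℝ) < σ ^ 2 := by positivity
  have hv : (⟨σ ^ 2, sq_nonneg σ⟩ : NNReal) ≠ 0 := by
    intro h
    exact hσ2.ne' (congrArg NNReal.toReal h)
  have hme : Measurable fun x : ℝ => ENNReal.ofReal (Real.exp (s * x + b)) := by fun_prop
  rw [gaussianReal_of_var_ne_zero m hv,
    lintegral_withDensity_eq_lintegral_mul _ (measurable_gaussianPDF m (⟨σ ^ 2, sq_nonneg σ⟩ : NNReal)) hme]
  have key : ∀ x : ℝ,
      (gaussianPDF m ⟨σ ^ 2, sq_nonneg σ⟩ * fun x => ENNReal.ofReal (Real.exp (s * x + b))) x =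
        ENNReal.ofReal (Real.exp (s * m + σ ^ 2 * s ^ 2 / 2 + b)) *
          gaussianPDF (m + σ ^ 2 * s) ⟨σ ^ 2, sq_nonneg σ⟩ x := by
    intro x
    simp only [Pi.mul_apply, gaussianPDF]
    rw [← ENNReal.ofReal_mul (gaussianPDFReal_nonneg _ (⟨σ ^ 2, sq_nonneg σ⟩ : NNReal) _),
      ← ENNReal.ofReal_mul (Real.exp_nonneg _)]
    congr 1
    simp only [gaussianPDFReal]
    erw [NNReal.coe_mk]
    have hexp : -(x - m) ^ 2 / (2 * σ ^ 2) + (s * x + b) =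
        (s * m + σ ^ 2 * s ^ 2 / 2 + b) + -(x - (m + σ ^ 2 * s)) ^ 2 / (2 * σ ^ 2) := by
      field_simp
      ring
    rw [mul_assoc, ← Real.exp_add, hexp, Real.exp_add]
    ring
  simp_rw [key]
  rw [lintegral_const_mul _ (measurable_gaussianPDF _ (⟨σ ^ 2, sq_nonneg σ⟩ : NNReal))]
  have h1 : ∫⁻ x, gaussianPDF (m + σ ^ 2 * s) ⟨σ ^ 2, sq_nonneg σ⟩ x = 1 :=
    lintegral_gaussianPDFReal_eq_one (m + σ ^ 2 * s) hv
  rw [h1, mul_one]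

private lemma moment_coord' (σ : ℝ) (hσ : 0 < σ) (α c a b : ℝ) (hα : 1 < α) (hd : |a - b| ≤ c) :
    ∫⁻ y, ENNReal.ofReal (Real.exp ((α - 1) * (((y - b) ^ 2 - (y - a) ^ 2) / (2 * σ ^ 2))))
        ∂gaussianReal a ⟨σ ^ 2, sq_nonneg σ⟩ ≤
      ENNReal.ofReal (Real.exp ((α - 1) * α * c ^ 2 / (2 * σ ^ 2))) := by
  have hσ2 : (0:ℝ) < σ ^ 2 := by positivity
  set s : ℝ := (α - 1) * (a - b) / σ ^ 2 with hs
  set bb : ℝ := (α - 1) * (b ^ 2 - a ^ 2) / (2 * σ ^ 2) with hbb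
  have hfun : ∀ y : ℝ, (α - 1) * (((y - b) ^ 2 - (y - a) ^ 2) / (2 * σ ^ 2)) = s * y + bb := by
    intro y
    rw [hs, hbb]
    field_simp
    ring
  simp_rw [hfun]
  rw [lintegral_exp_gauss' σ hσ a s bb]
  apply ENNReal.ofReal_le_ofReal
  apply Real.exp_le_exp.2
  have heq : s * a + σ ^ 2 * s ^ 2 / 2 + bb = (α - 1) * α * (a - b) ^ 2 / (2 * σ ^ 2) := by
    rw [hs, hbb]
    field_simp
    ring
  rw [heq]
  have hd2 : (a - b) ^ 2 ≤ c ^ 2 := by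
    have := abs_le.1 hd
    nlinarith
  gcongr

/-- Rigorous core of Theorem D.1: composing `T` Gaussian mechanisms with per-step sensitivity
`c` and noise variance `σ²` (product Gaussian measures with means within `c` coordinatewise)
yields `(ε, δ)`-DP with `ε = T·α·c²/(2σ²) + log(1/δ)/(α−1)`, for every `α > 1` and
`δ ∈ (0,1)`. -/
theorem dpsgd_composition_dp
    (T : ℕ) (hT : 1 ≤ T) (c σ : ℝ) (hc : 0 < c) (hσ : 0 < σ)
    (μ μ' : Fin T → ℝ) (hμ : ∀ t, |μ t - μ' t| ≤ c)
    (α : ℝ) (hα : 1 < α) (δ : ℝ) (hδ0 : 0 < δ) (hδ1 : δ < 1)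
    (S : Set (Fin T → ℝ)) (hS : MeasurableSet S) :
    Measure.pi (fun t => gaussianReal (μ t) ⟨σ ^ 2, sq_nonneg σ⟩) S ≤
      ENNReal.ofReal
          (Real.exp (T * α * c ^ 2 / (2 * σ ^ 2) + Real.log (1 / δ) / (α - 1))) *
        Measure.pi (fun t => gaussianReal (μ' t) ⟨σ ^ 2, sq_nonneg σ⟩) S
      + ENNReal.ofReal δ := by
  have hσ2 : (0:ℝ) < σ ^ 2 := by positivity
  have hα1 : (0:ℝ) < α - 1 := sub_pos.2 hα
  set v : NNReal := ⟨σ ^ 2, sq_nonneg σ⟩ with hv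
  set P := Measure.pi (fun t => gaussianReal (μ t) v) with hPdef
  set Q := Measure.pi (fun t => gaussianReal (μ' t) v) with hQdef
  set r : Fin T → ℝ → ℝ :=
    fun t x => ((x - μ' t) ^ 2 - (x - μ t) ^ 2) / (2 * σ ^ 2) with hrdef
  have hrm : ∀ t, Measurable (r t) := by
    intro t; rw [hrdef]; fun_prop
  set g : (Fin T → ℝ) → ℝ := fun x => ∑ t, r t (x t) with hgdef
  have hgm : Measurable g :=
    Finset.measurable_sum _ fun t _ => (hrm t).comp (measurable_pi_apply t)
  set F : (Fin T → ℝ) → ℝ≥0∞ :=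
    fun x => ∏ t, ENNReal.ofReal (Real.exp (r t (x t))) with hFdef
  have hFg : ∀ x, F x = ENNReal.ofReal (Real.exp (g x)) := by
    intro x
    rw [hFdef, hgdef]
    simp only
    rw [Real.exp_sum, ENNReal.ofReal_prod_of_nonneg fun t _ => (Real.exp_nonneg _)]
  -- P as a density against Q
  have hL1 : ∀ t, gaussianReal (μ t) v =
      (gaussianReal (μ' t) v).withDensity
        (fun x => ENNReal.ofReal (Real.exp (r t x))) :=
    fun t => gauss_ratio' σ hσ (μ t) (μ' t)
  have hPQ : P = Q.withDensity F := by
    rw [hPdef, hQdef]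
    have hfe : (fun t => gaussianReal (μ t) v) =
        fun t => (gaussianReal (μ' t) v).withDensity
          (fun x => ENNReal.ofReal (Real.exp (r t x))) := funext hL1
    rw [hfe]
    haveI : ∀ t, SigmaFinite ((gaussianReal (μ' t) v).withDensity
        (fun x => ENNReal.ofReal (Real.exp (r t x)))) := by
      intro t
      rw [← hL1 t]
      infer_instance
    exact pi_withDensity' _ _ fun t =>
      (Real.measurable_exp.comp (hrm t)).ennreal_ofReal
  set M : ℝ := (T : ℝ) * α * c ^ 2 / (2 * σ ^ 2) with hMdef
  set ε : ℝ := M + Real.log (1 / δ) / (α - 1) with hεdef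
  set A : Set (Fin T → ℝ) := {x | g x ≤ ε} with hAdef
  have hAm : MeasurableSet A := measurableSet_le hgm measurable_const
  -- the moment bound
  have hmom : ∫⁻ x, ENNReal.ofReal (Real.exp ((α - 1) * g x)) ∂P ≤
      ENNReal.ofReal (Real.exp ((α - 1) * M)) := by
    have hx : ∀ x : Fin T → ℝ, ENNReal.ofReal (Real.exp ((α - 1) * g x)) =
        ∏ t, ENNReal.ofReal (Real.exp ((α - 1) * r t (x t))) := by
      intro x
      rw [hgdef]
      simp only
      rw [Finset.mul_sum, Real.exp_sum,
        ENNReal.ofReal_prod_of_nonneg fun t _ => (Real.exp_nonneg _)]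
    simp_rw [hx]
    rw [hPdef, lintegral_pi_prod' (fun t => gaussianReal (μ t) v)
      (fun t y => ENNReal.ofReal (Real.exp ((α - 1) * r t y)))
      (fun t => (Real.measurable_exp.comp ((hrm t).const_mul _)).ennreal_ofReal)]
    calc ∏ t, ∫⁻ y, ENNReal.ofReal (Real.exp ((α - 1) * r t y)) ∂gaussianReal (μ t) v
        ≤ ∏ _t : Fin T, ENNReal.ofReal (Real.exp ((α - 1) * α * c ^ 2 / (2 * σ ^ 2))) := by
          refine Finset.prod_le_prod' fun t _ => ?_
          exact moment_coord' σ hσ α c (μ t) (μ' t) hα (hμ t)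
      _ = ENNReal.ofReal (Real.exp ((α - 1) * M)) := by
          rw [Finset.prod_const, Finset.card_univ, Fintype.card_fin,
            ← ENNReal.ofReal_pow (Real.exp_nonneg _), ← Real.exp_nat_mul]
          congr 1
          rw [hMdef]
          ring
  -- Markov bound for the bad event
  have h2 : P Aᶜ ≤ ENNReal.ofReal δ := by
    have hhm : Measurable fun x => ENNReal.ofReal (Real.exp ((α - 1) * g x)) := by
      fun_prop
    have markov := mul_meas_ge_le_lintegral₀ (μ := P) hhm.aemeasurable
      (ENNReal.ofReal (Real.exp ((α - 1) * ε)))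
    have hsub : Aᶜ ⊆ {x | ENNReal.ofReal (Real.exp ((α - 1) * ε)) ≤
        ENNReal.ofReal (Real.exp ((α - 1) * g x))} := by
      intro x hx
      simp only [hAdef, Set.mem_compl_iff, Set.mem_setOf_eq, not_le] at hx ⊢
      exact ENNReal.ofReal_le_ofReal (Real.exp_le_exp.2
        (by nlinarith))
    have key : ENNReal.ofReal (Real.exp ((α - 1) * ε)) * P Aᶜ ≤
        ENNReal.ofReal (Real.exp ((α - 1) * M)) :=
      le_trans (mul_le_mul_right (measure_mono hsub) _) (markov.trans hmom)
    have hδrw : Real.exp ((α - 1) * M) = δ * Real.exp ((α - 1) * ε) := by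
      have hlog : (α - 1) * ε = (α - 1) * M + Real.log (1 / δ) := by
        rw [hεdef, mul_add, mul_div_cancel₀ _ hα1.ne']
      rw [hlog, Real.exp_add, Real.exp_log (by positivity)]
      field_simp
    have key2 : ENNReal.ofReal (Real.exp ((α - 1) * ε)) * P Aᶜ ≤
        ENNReal.ofReal (Real.exp ((α - 1) * ε)) * ENNReal.ofReal δ := by
      refine key.trans (le_of_eq ?_)
      rw [← ENNReal.ofReal_mul (Real.exp_nonneg _), hδrw]
      ring_nf
    exact (ENNReal.mul_le_mul_iff_right
      (ENNReal.ofReal_pos.2 (Real.exp_pos _)).ne' ENNReal.ofReal_ne_top).1 key2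
  -- the good event
  have h1 : P (S ∩ A) ≤ ENNReal.ofReal (Real.exp ε) * Q S := by
    rw [hPQ, withDensity_apply _ (hS.inter hAm)]
    calc ∫⁻ x in S ∩ A, F x ∂Q
        ≤ ∫⁻ _x in S ∩ A, ENNReal.ofReal (Real.exp ε) ∂Q := by
          refine setLIntegral_mono measurable_const fun x hx => ?_
          rw [hFg]
          exact ENNReal.ofReal_le_ofReal (Real.exp_le_exp.2 hx.2)
      _ = ENNReal.ofReal (Real.exp ε) * Q (S ∩ A) := setLIntegral_const _ _
      _ ≤ ENNReal.ofReal (Real.exp ε) * Q S :=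
          mul_le_mul_right (measure_mono Set.inter_subset_left) _
  calc P S ≤ P (S ∩ A) + P Aᶜ := by
        refine le_trans (measure_mono (show S ⊆ (S ∩ A) ∪ Aᶜ from ?_)) (measure_union_le _ _)
        intro x hx
        by_cases h : x ∈ A
        · exact Or.inl ⟨hx, h⟩
        · exact Or.inr h
    _ ≤ ENNReal.ofReal (Real.exp ε) * Q S + ENNReal.ofReal δ := add_le_add h1 h2
    _ = _ := by rw [hεdef, hMdef]
end

section
/- Let 0 < ε ≤ 1, 0 < δ < 1, Δ > 0, and let σ satisfy σ ≥ √(2 ln(1.25/δ)) · Δ / ε. Then for all μ₁, μ₂ ∈ ℝ with |μ₁ − μ₂| ≤ Δ and every measurable set S ⊆ ℝ: N(μ₁, σ²)(S) ≤ e^ε · N(μ₂, σ²)(S) + δ. -/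
open MeasureTheory ProbabilityTheory

section GaussianDPAux
open Real Set
open scoped NNReal ENNReal
set_option maxHeartbeats 1000000


lemma gauss_shift (μ : ℝ) (v : ℝ≥0) (s : Set ℝ) (hs : MeasurableSet s) :
    gaussianReal μ v s = gaussianReal 0 v ((· + μ) ⁻¹' s) := by
  have h := gaussianReal_map_add_const (μ := 0) (v := v) μ
  rw [zero_add] at h
  rw [← h, Measure.map_apply (measurable_add_const μ) hs]

lemma gauss_reflect (v : ℝ≥0) (t : ℝ) :
    gaussianReal 0 v (Iio (-t)) = gaussianReal 0 v (Ioi t) := by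
  have h := gaussianReal_map_const_mul (μ := 0) (v := v) (-1)
  have hv : NNReal.mk ((-1:ℝ)^2) (sq_nonneg _) = 1 := by ext; norm_num
  rw [mul_zero, hv, one_mul] at h
  calc gaussianReal 0 v (Iio (-t))
      = (Measure.map (fun x : ℝ => -1 * x) (gaussianReal 0 v)) (Iio (-t)) := by rw [h]
    _ = gaussianReal 0 v ((fun x : ℝ => -1 * x) ⁻¹' (Iio (-t))) := by
        rw [Measure.map_apply (measurable_const_mul (-1 : ℝ)) measurableSet_Iio]
    _ = gaussianReal 0 v (Ioi t) := by
        congr 1; ext x; simp only [mem_preimage, mem_Iio, mem_Ioi]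
        constructor <;> intro h <;> linarith

lemma gauss_half (μ : ℝ) {v : ℝ≥0} (hv : v ≠ 0) :
    gaussianReal μ v (Ioi μ) = ENNReal.ofReal (1/2) := by
  have h0 : ((· + μ) ⁻¹' (Ioi μ) : Set ℝ) = Ioi 0 := by ext x; simp
  rw [gauss_shift μ v _ measurableSet_Ioi, h0,
    gaussianReal_apply_eq_integral _ hv]
  congr 1
  have hvpos : (0:ℝ) < (v:ℝ) := by positivity
  have hb : (0:ℝ) < (2*(v:ℝ))⁻¹ := by positivity
  have : ∀ x : ℝ, gaussianPDFReal 0 v x = (√(2 * π * v))⁻¹ * rexp (-(2*(v:ℝ))⁻¹ * x^2) := by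
    intro x
    rw [gaussianPDFReal]
    ring_nf
  rw [MeasureTheory.setIntegral_congr_fun measurableSet_Ioi (fun x _ => this x),
    MeasureTheory.integral_const_mul, integral_gaussian_Ioi]
  rw [show π / (2*(v:ℝ))⁻¹ = 2 * π * v by field_simp]
  rw [← mul_div_assoc, inv_mul_cancel₀ (by positivity)]


-- Chernoff-style tail: for x ≥ 0
lemma gauss_tail_Q {v : ℝ≥0} (hv : v ≠ 0) {x : ℝ} (hx : 0 ≤ x) :
    gaussianReal 0 v (Ioi x) ≤ ENNReal.ofReal (rexp (-x^2 / (2*(v:ℝ))) / 2) := by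
  have hvpos : (0:ℝ) < (v:ℝ) := by positivity
  have hpt : ∀ t ∈ Ioi x, gaussianPDF 0 v t ≤
      ENNReal.ofReal (rexp (-x^2 / (2*(v:ℝ)))) * gaussianPDF x v t := by
    intro t ht
    rw [gaussianPDF, gaussianPDF, ← ENNReal.ofReal_mul (by positivity)]
    apply ENNReal.ofReal_le_ofReal
    rw [gaussianPDFReal, gaussianPDFReal]
    rw [show rexp (-x^2/(2*(v:ℝ))) * ((√(2*π*(v:ℝ)))⁻¹ * rexp (-(t-x)^2/(2*(v:ℝ))))
        = (√(2*π*(v:ℝ)))⁻¹ * (rexp (-x^2/(2*(v:ℝ))) * rexp (-(t-x)^2/(2*(v:ℝ)))) by ring,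
      ← Real.exp_add]
    apply mul_le_mul_of_nonneg_left _ (by positivity)
    apply Real.exp_le_exp.mpr
    have ht' : x ≤ t := le_of_lt ht
    rw [← add_div, div_le_div_iff_of_pos_right (by positivity)]
    nlinarith
  calc gaussianReal 0 v (Ioi x) = ∫⁻ t in Ioi x, gaussianPDF 0 v t :=
        gaussianReal_apply _ hv _
    _ ≤ ∫⁻ t in Ioi x, ENNReal.ofReal (rexp (-x^2 / (2*(v:ℝ)))) * gaussianPDF x v t :=
        setLIntegral_mono ((measurable_gaussianPDF x v).const_mul _) hpt
    _ = ENNReal.ofReal (rexp (-x^2 / (2*(v:ℝ)))) * ∫⁻ t in Ioi x, gaussianPDF x v t := by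
        rw [lintegral_const_mul _ (measurable_gaussianPDF _ _)]
    _ = ENNReal.ofReal (rexp (-x^2 / (2*(v:ℝ)))) * gaussianReal x v (Ioi x) := by
        rw [gaussianReal_apply _ hv]
    _ = ENNReal.ofReal (rexp (-x^2 / (2*(v:ℝ))) / 2) := by
        rw [gauss_half _ hv, ← ENNReal.ofReal_mul (by positivity)]
        norm_num [div_eq_mul_inv]

-- crude bound for negative cutoffs
lemma gauss_tail_P {v : ℝ≥0} (hv : v ≠ 0) {a : ℝ} (ha : a ≤ 0) :
    gaussianReal 0 v (Ioi a) ≤ ENNReal.ofReal (1/2 + (-a) * (√(2*π*(v:ℝ)))⁻¹) := by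
  have hvpos : (0:ℝ) < (v:ℝ) := by positivity
  have hsplit : Ioi a = Ioc a 0 ∪ Ioi (0:ℝ) := (Ioc_union_Ioi_eq_Ioi ha).symm
  have h1 : gaussianReal 0 v (Ioc a 0) ≤ ENNReal.ofReal ((-a) * (√(2*π*(v:ℝ)))⁻¹) := by
    rw [gaussianReal_apply _ hv]
    calc ∫⁻ t in Ioc a 0, gaussianPDF 0 v t
        ≤ ∫⁻ _ in Ioc a 0, ENNReal.ofReal ((√(2*π*(v:ℝ)))⁻¹) := by
          apply setLIntegral_mono (by measurability)
          intro t _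
          apply ENNReal.ofReal_le_ofReal
          rw [gaussianPDFReal]
          nth_rewrite 2 [show ((√(2*π*(v:ℝ)))⁻¹) = (√(2*π*(v:ℝ)))⁻¹ * 1 by ring]
          apply mul_le_mul_of_nonneg_left _ (by positivity)
          rw [← Real.exp_zero]
          apply Real.exp_le_exp.mpr
          apply div_nonpos_of_nonpos_of_nonneg (by nlinarith [sq_nonneg (t - 0)]) (by positivity)
      _ = ENNReal.ofReal ((√(2*π*(v:ℝ)))⁻¹) * volume (Ioc a 0) := by
          rw [setLIntegral_const]
      _ = ENNReal.ofReal ((-a) * (√(2*π*(v:ℝ)))⁻¹) := by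
          rw [Real.volume_Ioc, ← ENNReal.ofReal_mul (by positivity)]
          rw [show (0:ℝ) - a = -a by ring, mul_comm]
  calc gaussianReal 0 v (Ioi a) ≤ gaussianReal 0 v (Ioc a 0) + gaussianReal 0 v (Ioi 0) := by
        rw [hsplit]; exact measure_union_le _ _
    _ ≤ ENNReal.ofReal ((-a) * (√(2*π*(v:ℝ)))⁻¹) + ENNReal.ofReal (1/2) := by
        rw [gauss_half _ hv]; exact add_le_add_left h1 _
    _ = ENNReal.ofReal (1/2 + (-a) * (√(2*π*(v:ℝ)))⁻¹) := by
        rw [← ENNReal.ofReal_add (mul_nonneg (neg_nonneg.mpr ha) (by positivity)) (by norm_num), add_comm]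


lemma num_exp_half : rexp (1/2) ≤ 5/2 := by
  have h1 : rexp (1/2) ^ 2 = rexp 1 := by
    rw [← Real.exp_nat_mul]; norm_num
  have h2 := Real.exp_one_lt_d9
  nlinarith [Real.exp_pos (1/2)]

lemma num_exp_quarter : rexp (1/4) ≤ 13/10 := by
  have h1 : rexp (1/4) ^ 4 = rexp 1 := by
    rw [← Real.exp_nat_mul]; norm_num
  have h2 := Real.exp_one_lt_d9
  have hq := Real.exp_pos (1/4 : ℝ)
  by_contra hcon
  push_neg at hcon
  have h3 : rexp (1/4)^2 > 169/100 := by nlinarith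
  have h4 : rexp (1/4)^4 > 28561/10000 := by nlinarith
  linarith

lemma num_log : (1/5 : ℝ) ≤ Real.log (5/4) := by
  rw [Real.le_log_iff_exp_le (by norm_num : (0:ℝ) < 5/4)]
  have h := Real.add_one_le_exp (-(1/5) : ℝ)
  rw [Real.exp_neg] at h
  have hq := Real.exp_pos (1/5 : ℝ)
  have hm : rexp (1/5) * (rexp (1/5))⁻¹ = 1 := mul_inv_cancel₀ (ne_of_gt hq)
  nlinarith


lemma tail_main (σ ε δ Δ d : ℝ) (hε0 : 0 < ε) (hε1 : ε ≤ 1) (hδ0 : 0 < δ) (hδ1 : δ < 1)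
    (hΔ : 0 < Δ) (hσ : Real.sqrt (2 * Real.log (1.25 / δ)) * Δ / ε ≤ σ)
    (hd0 : 0 < d) (hdΔ : d ≤ Δ) :
    gaussianReal 0 ⟨σ^2, sq_nonneg σ⟩ (Ioi (σ^2 * ε / d - d/2)) ≤ ENNReal.ofReal δ := by
  set L : ℝ := Real.log (1.25 / δ) with hLdef
  have hL : 1/5 ≤ L := by
    refine le_trans num_log ?_
    apply Real.log_le_log (by norm_num)
    rw [le_div_iff₀ hδ0]; nlinarith
  set c : ℝ := Real.sqrt (2 * L) with hcdef
  have hc2 : c^2 = 2 * L := Real.sq_sqrt (by linarith)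
  have hc0 : (0:ℝ) < c := Real.sqrt_pos.mpr (by linarith)
  have hc063 : (63/100 : ℝ) ≤ c := by nlinarith
  have hσ0 : 0 < σ := lt_of_lt_of_le (by positivity) hσ
  have hv : (⟨σ^2, sq_nonneg σ⟩ : ℝ≥0) ≠ 0 := by
    intro h
    have h' : σ^2 = 0 := congrArg NNReal.toReal h
    nlinarith
  have hvcoe : ((⟨σ^2, sq_nonneg σ⟩ : ℝ≥0) : ℝ) = σ^2 := rfl
  have hcσ : c * Δ ≤ σ * ε := by
    rw [div_le_iff₀ hε0] at hσ; linarith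
  -- key: σ*(c - ε/(2*c)) ≤ a
  have key : σ * (c - ε/(2*c)) ≤ σ^2 * ε / d - d/2 := by
    have h1 : σ^2*ε/Δ ≤ σ^2*ε/d := by
      apply div_le_div_of_nonneg_left (by positivity) hd0 hdΔ
    have h2 : c*σ ≤ σ^2*ε/Δ := by
      rw [le_div_iff₀ hΔ]; nlinarith
    have h3 : Δ/2 ≤ σ*ε/(2*c) := by
      rw [le_div_iff₀ (by positivity)]; nlinarith
    have h4 : σ * (c - ε/(2*c)) = c*σ - σ*ε/(2*c) := by
      field_simp
    linarith
  set a₀ : ℝ := σ * (c - ε/(2*c)) with ha₀def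
  have hmono : gaussianReal 0 ⟨σ^2, sq_nonneg σ⟩ (Ioi (σ^2 * ε / d - d/2)) ≤
      gaussianReal 0 ⟨σ^2, sq_nonneg σ⟩ (Ioi a₀) :=
    measure_mono (Ioi_subset_Ioi key)
  rcases le_or_gt ε (2 * c^2) with hcase | hcase
  · -- a₀ ≥ 0, Chernoff bound
    have ha₀ : 0 ≤ a₀ := by
      have : ε/(2*c) ≤ c := by rw [div_le_iff₀ (by positivity)]; nlinarith
      have h0 : 0 ≤ c - ε/(2*c) := by linarith
      exact mul_nonneg hσ0.le h0
    refine le_trans (hmono.trans (gauss_tail_Q hv ha₀)) (ENNReal.ofReal_le_ofReal ?_)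
    have hexpL : rexp L = 1.25 / δ := Real.exp_log (by positivity)
    have harg : -a₀^2 / (2*((⟨σ^2, sq_nonneg σ⟩ : ℝ≥0):ℝ)) ≤ ε/2 - L := by
      rw [hvcoe]
      have hu : c * (ε/(2*c)) * 2 = ε := by field_simp
      have hsq : c^2 - ε ≤ (c - ε/(2*c))^2 := by nlinarith [sq_nonneg (ε/(2*c))]
      rw [ha₀def, mul_pow, div_le_iff₀ (by positivity : (0:ℝ) < 2*σ^2)]
      nlinarith
    calc rexp (-a₀^2 / (2*((⟨σ^2, sq_nonneg σ⟩ : ℝ≥0):ℝ))) / 2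
        ≤ rexp (ε/2 - L) / 2 := by
          have := Real.exp_le_exp.mpr harg; linarith
      _ = rexp (ε/2) * rexp (-L) / 2 := by rw [← Real.exp_add]; ring_nf
      _ = rexp (ε/2) * (4*δ/5) / 2 := by
          have hinv : rexp (-L) = 4*δ/5 := by
            rw [Real.exp_neg, hexpL, show (1.25:ℝ) = 5/4 by norm_num]
            field_simp
          rw [hinv]
      _ ≤ rexp (1/2) * (4*δ/5) / 2 := by
          have h9 : rexp (ε/2) ≤ rexp (1/2) := Real.exp_le_exp.mpr (by linarith)
          nlinarith [Real.exp_pos (ε/2)]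
      _ ≤ δ := by nlinarith [num_exp_half, Real.exp_pos ((1:ℝ)/2)]
  · -- a₀ < 0, crude bound
    have ha₀ : a₀ ≤ 0 := by
      have : c < ε/(2*c) := by rw [lt_div_iff₀ (by positivity)]; nlinarith
      nlinarith
    refine le_trans (hmono.trans (gauss_tail_P hv ha₀)) (ENNReal.ofReal_le_ofReal ?_)
    -- δ ≥ 25/26
    have hL4 : L < 1/4 := by nlinarith
    have hexpL : rexp L = 1.25 / δ := Real.exp_log (by positivity)
    have hδlb : 25/26 ≤ δ := by
      have h1 : rexp L ≤ rexp (1/4) := Real.exp_le_exp.mpr (by linarith)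
      have h2 : 1.25 / δ ≤ 13/10 := by rw [← hexpL]; linarith [num_exp_quarter]
      rw [div_le_iff₀ hδ0] at h2; linarith
    -- bound (-a₀) * s⁻¹
    change 1/2 + (-a₀) * (√(2*π*σ^2))⁻¹ ≤ δ
    set s : ℝ := √(2*π*σ^2) with hsdef
    have hs0 : 0 < s := by
      rw [hsdef]
      apply Real.sqrt_pos.mpr
      nlinarith [Real.pi_gt_three]
    have hs2 : s^2 = 2*π*σ^2 := by
      rw [hsdef]
      exact Real.sq_sqrt (by nlinarith [Real.pi_gt_three])
    have hs : 244/100 * σ ≤ s := by nlinarith [Real.pi_gt_three]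
    have hna : -a₀ ≤ 16/100 * σ := by
      have h5 : ε/(2*c) - c ≤ 16/100 := by
        rw [div_sub' (by positivity : (2*c) ≠ 0), div_le_iff₀ (by positivity)]
        nlinarith
      have : -a₀ = σ * (ε/(2*c) - c) := by rw [ha₀def]; ring
      nlinarith
    have hfrac : (-a₀) * s⁻¹ ≤ 7/100 := by
      rw [← div_eq_mul_inv, div_le_iff₀ hs0]
      nlinarith
    linarith



end GaussianDPAux

open Real Set
open scoped NNReal ENNReal

set_option maxHeartbeats 1000000 in
/-- The `(ε, δ)`-DP guarantee of the Gaussian mechanism (Section 3): if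
`σ ≥ √(2 ln(1.25/δ)) · Δ / ε` with `0 < ε ≤ 1`, then for means within `Δ`,
`N(μ₁, σ²)(S) ≤ e^ε · N(μ₂, σ²)(S) + δ` for every measurable `S`. -/
theorem gaussian_mechanism_dp
    (ε δ Δ σ : ℝ) (hε0 : 0 < ε) (hε1 : ε ≤ 1) (hδ0 : 0 < δ) (hδ1 : δ < 1) (hΔ : 0 < Δ)
    (hσ : Real.sqrt (2 * Real.log (1.25 / δ)) * Δ / ε ≤ σ)
    (μ₁ μ₂ : ℝ) (hμ : |μ₁ - μ₂| ≤ Δ) (S : Set ℝ) (hS : MeasurableSet S) :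
    gaussianReal μ₁ ⟨σ ^ 2, sq_nonneg σ⟩ S ≤
      ENNReal.ofReal (Real.exp ε) * gaussianReal μ₂ ⟨σ ^ 2, sq_nonneg σ⟩ S
      + ENNReal.ofReal δ := by
  have hlogpos : 0 < Real.log (1.25 / δ) := by
    have h1 : (1/5:ℝ) ≤ Real.log (1.25/δ) := by
      refine le_trans num_log (Real.log_le_log (by norm_num) ?_)
      rw [le_div_iff₀ hδ0]; nlinarith
    linarith
  have hσ0 : 0 < σ := by
    refine lt_of_lt_of_le ?_ hσ
    have : 0 < Real.sqrt (2 * Real.log (1.25/δ)) := Real.sqrt_pos.mpr (by linarith)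
    positivity
  set v : ℝ≥0 := ⟨σ^2, sq_nonneg σ⟩ with hvdef
  have hv : v ≠ 0 := by
    intro h
    have h' : σ^2 = 0 := congrArg NNReal.toReal h
    nlinarith
  have hvcoe : (v:ℝ) = σ^2 := rfl
  obtain ⟨d, hddef⟩ : ∃ t : ℝ, t = μ₁ - μ₂ := ⟨μ₁ - μ₂, rfl⟩
  rw [← hddef] at hμ
  set B : Set ℝ := {x : ℝ | 2 * σ^2 * ε < d * (2*x - μ₁ - μ₂)} with hBdef
  have hB : MeasurableSet B := by
    apply measurableSet_lt measurable_const
    fun_prop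
  -- pointwise bound off B
  have hpt : ∀ x ∉ B, gaussianPDFReal μ₁ v x ≤ rexp ε * gaussianPDFReal μ₂ v x := by
    intro x hx
    simp only [hBdef, mem_setOf_eq, not_lt] at hx
    rw [gaussianPDFReal, gaussianPDFReal,
      show rexp ε * ((√(2*π*(v:ℝ)))⁻¹ * rexp (-(x-μ₂)^2/(2*(v:ℝ))))
        = (√(2*π*(v:ℝ)))⁻¹ * (rexp ε * rexp (-(x-μ₂)^2/(2*(v:ℝ)))) by ring,
      ← Real.exp_add]
    apply mul_le_mul_of_nonneg_left _ (by positivity)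
    apply Real.exp_le_exp.mpr
    rw [hvcoe]
    have h2v : (0:ℝ) < 2*σ^2 := by positivity
    rw [show ε + -(x-μ₂)^2/(2*σ^2) = (ε*(2*σ^2) + -(x-μ₂)^2)/(2*σ^2) by field_simp,
      div_le_div_iff_of_pos_right h2v]
    have h3 : d*(2*x-μ₁-μ₂) = (x-μ₂)^2 - (x-μ₁)^2 := by rw [hddef]; ring
    linarith
  -- split
  have hsplit : gaussianReal μ₁ v S ≤ gaussianReal μ₁ v (S ∩ Bᶜ) + gaussianReal μ₁ v B := by
    calc gaussianReal μ₁ v S = gaussianReal μ₁ v ((S ∩ Bᶜ) ∪ (S ∩ B)) := by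
          rw [show (S ∩ Bᶜ) ∪ (S ∩ B) = S by rw [union_comm, Set.inter_union_compl]]
      _ ≤ gaussianReal μ₁ v (S ∩ Bᶜ) + gaussianReal μ₁ v (S ∩ B) := measure_union_le _ _
      _ ≤ gaussianReal μ₁ v (S ∩ Bᶜ) + gaussianReal μ₁ v B :=
          add_le_add_right (measure_mono inter_subset_right) _
  -- good part
  have hgood : gaussianReal μ₁ v (S ∩ Bᶜ) ≤ ENNReal.ofReal (rexp ε) * gaussianReal μ₂ v S := by
    calc gaussianReal μ₁ v (S ∩ Bᶜ) = ∫⁻ x in S ∩ Bᶜ, gaussianPDF μ₁ v x :=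
          gaussianReal_apply _ hv _
      _ ≤ ∫⁻ x in S ∩ Bᶜ, ENNReal.ofReal (rexp ε) * gaussianPDF μ₂ v x := by
          apply setLIntegral_mono ((measurable_gaussianPDF _ _).const_mul _)
          intro x hx
          rw [gaussianPDF, gaussianPDF, ← ENNReal.ofReal_mul (Real.exp_nonneg ε)]
          exact ENNReal.ofReal_le_ofReal (hpt x hx.2)
      _ = ENNReal.ofReal (rexp ε) * ∫⁻ x in S ∩ Bᶜ, gaussianPDF μ₂ v x := by
          rw [lintegral_const_mul _ (measurable_gaussianPDF _ _)]
      _ = ENNReal.ofReal (rexp ε) * gaussianReal μ₂ v (S ∩ Bᶜ) := by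
          rw [gaussianReal_apply _ hv]
      _ ≤ ENNReal.ofReal (rexp ε) * gaussianReal μ₂ v S :=
          mul_le_mul_right (measure_mono inter_subset_left) _
  -- bad part
  have hbad : gaussianReal μ₁ v B ≤ ENNReal.ofReal δ := by
    rcases lt_trichotomy d 0 with hd | hd | hd
    · -- d < 0 : B ⊆ Iio
      set d' : ℝ := -d with hd'def
      have hd'0 : 0 < d' := by linarith
      have hd'Δ : d' ≤ Δ := by
        have := neg_le_abs d; linarith [hμ]
      have hsub : B ⊆ Iio (μ₁ - (σ^2*ε/d' - d'/2)) := by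
        intro x hx
        simp only [hBdef, mem_setOf_eq] at hx
        simp only [mem_Iio]
        have had : σ^2*ε/d' * d' = σ^2*ε := div_mul_cancel₀ _ (ne_of_gt hd'0)
        by_contra hcon
        push_neg at hcon
        have h1 : 2*d'*(μ₁ - (σ^2*ε/d' - d'/2)) ≤ 2*d'*x := by nlinarith
        have h3 : d'*μ₁ - d'*μ₂ = -(d'*d') := by rw [hd'def, hddef]; ring
        have h4 : d*(2*x-μ₁-μ₂) = -(d'*(2*x)) + d'*μ₁ + d'*μ₂ := by
          rw [hd'def, hddef]; ring
        nlinarith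
      refine le_trans (measure_mono hsub) ?_
      rw [gauss_shift _ _ _ measurableSet_Iio,
        show ((· + μ₁) ⁻¹' (Iio (μ₁ - (σ^2*ε/d' - d'/2)))) = Iio (-(σ^2*ε/d' - d'/2)) by
          ext x; simp only [mem_preimage, mem_Iio]; constructor <;> intro h <;> linarith,
        gauss_reflect]
      exact tail_main σ ε δ Δ d' hε0 hε1 hδ0 hδ1 hΔ hσ hd'0 hd'Δ
    · -- d = 0 : B empty
      have hBe : B = ∅ := by
        ext x
        simp only [hBdef, mem_setOf_eq, hd, zero_mul, mem_empty_iff_false, iff_false, not_lt]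
        nlinarith
      rw [hBe]
      simp
    · -- d > 0 : B ⊆ Ioi
      have hdΔ : d ≤ Δ := le_trans (le_abs_self d) hμ
      have hsub : B ⊆ Ioi (μ₁ + (σ^2*ε/d - d/2)) := by
        intro x hx
        simp only [hBdef, mem_setOf_eq] at hx
        simp only [mem_Ioi]
        have had : σ^2*ε/d * d = σ^2*ε := div_mul_cancel₀ _ (ne_of_gt hd)
        by_contra hcon
        push_neg at hcon
        have h1 : 2*d*x ≤ 2*d*(μ₁ + (σ^2*ε/d - d/2)) := by nlinarith
        have h3 : d*μ₁ - d*μ₂ = d*d := by rw [hddef]; ring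
        nlinarith
      refine le_trans (measure_mono hsub) ?_
      rw [gauss_shift _ _ _ measurableSet_Ioi,
        show ((· + μ₁) ⁻¹' (Ioi (μ₁ + (σ^2*ε/d - d/2)))) = Ioi (σ^2*ε/d - d/2) by
          ext x; simp only [mem_preimage, mem_Ioi]; constructor <;> intro h <;> linarith]
      exact tail_main σ ε δ Δ d hε0 hε1 hδ0 hδ1 hΔ hσ hd hdΔ
  exact le_trans hsplit (add_le_add hgood hbad)
end

section
/- Let M ≥ 1, Δ > 0, ε > 0, and let s, s' : {1,…,M} → ℝ satisfy |s_m − s'_m| ≤ Δ for all m. Define probability vectors p and p' on {1,…,M} by p_m = exp((ε/(2Δ))·s_m) / Σ_{m'} exp((ε/(2Δ))·s_{m'}) and p'_m = exp((ε/(2Δ))·s'_m) / Σ_{m'} exp((ε/(2Δ))·s'_{m'}). Then for every real α > 1: (1/(α−1)) · log( Σ_{m=1}^M p_m^α · (p'_m)^{1−α} ) ≤ α·ε²/8. -/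
open Real

lemma hasDerivAt_sum_exp {n : ℕ} (a k : Fin n → ℝ) (β : ℝ) :
    HasDerivAt (fun β => ∑ m, a m * Real.exp (k m * β))
      (∑ m, (a m * k m) * Real.exp (k m * β)) β := by
  have h : ∀ m ∈ Finset.univ, HasDerivAt (fun β => a m * Real.exp (k m * β))
      ((a m * k m) * Real.exp (k m * β)) β := by
    intro m _
    have h1 : HasDerivAt (fun β : ℝ => k m * β) (k m) β := by
      simpa using (hasDerivAt_id β).const_mul (k m)
    have := (h1.exp).const_mul (a m)
    exact this.congr_deriv (by ring)
  exact HasDerivAt.fun_sum h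

set_option maxHeartbeats 1000000 in
/-- zCDP guarantee of the exponential mechanism (Appendix B.3): if the scores `s, s'` on `M`
candidates differ by at most `Δ` pointwise, then the Rényi divergence of order `α` between the
exponential-mechanism distributions `p_m ∝ exp((ε/(2Δ))·s_m)` and `p'_m ∝ exp((ε/(2Δ))·s'_m)`
is at most `α·ε²/8`, for every `α > 1`. -/
theorem exponential_mechanism_zCDP
    (M : ℕ) (hM : 1 ≤ M) (Δ ε : ℝ) (hΔ : 0 < Δ) (hε : 0 < ε)
    (s s' : Fin M → ℝ) (hs : ∀ m, |s m - s' m| ≤ Δ) (α : ℝ) (hα : 1 < α) :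
    (1 / (α - 1)) * Real.log (∑ m : Fin M,
        (Real.exp (ε / (2 * Δ) * s m) / ∑ m' : Fin M, Real.exp (ε / (2 * Δ) * s m')) ^ α *
        (Real.exp (ε / (2 * Δ) * s' m) / ∑ m' : Fin M, Real.exp (ε / (2 * Δ) * s' m')) ^ (1 - α))
      ≤ α * ε ^ 2 / 8 := by
  have hMne : Nonempty (Fin M) := Fin.pos_iff_nonempty.mp (by omega)
  set c : ℝ := ε / (2 * Δ) with hc_def
  have hc : 0 < c := by positivity
  set y : Fin M → ℝ := fun m => c * (s m - s' m) with hy_def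
  set w : Fin M → ℝ := fun m => Real.exp (c * s' m) with hw_def
  set g : ℝ → ℝ := fun β => ∑ m, w m * Real.exp (y m * β) with hg_def
  set g1 : ℝ → ℝ := fun β => ∑ m, (w m * y m) * Real.exp (y m * β) with hg1_def
  set g2 : ℝ → ℝ := fun β => ∑ m, ((w m * y m) * y m) * Real.exp (y m * β) with hg2_def
  have hgpos : ∀ β, 0 < g β := by
    intro β
    apply Finset.sum_pos (fun m _ => by positivity) Finset.univ_nonempty
  have hy : ∀ m, |y m| ≤ ε / 2 := by
    intro m
    have : c * Δ = ε / 2 := by rw [hc_def]; field_simp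
    calc |y m| = c * |s m - s' m| := by
          rw [hy_def]; simp [abs_mul, abs_of_pos hc]
      _ ≤ c * Δ := by nlinarith [hs m]
      _ = ε / 2 := this
  have hysq : ∀ m, y m ^ 2 ≤ ε ^ 2 / 4 := by
    intro m
    have h1 := hy m
    have h2 := abs_nonneg (y m)
    nlinarith [sq_abs (y m)]
  -- derivative facts
  have hdg : ∀ β, HasDerivAt g (g1 β) β := fun β => hasDerivAt_sum_exp w y β
  have hdg1 : ∀ β, HasDerivAt g1 (g2 β) β := fun β => hasDerivAt_sum_exp (fun m => w m * y m) y β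
  -- the auxiliary convex function
  set H : ℝ → ℝ := fun β => ε ^ 2 / 8 * β ^ 2 - Real.log (g β) with hH_def
  set H1 : ℝ → ℝ := fun β => ε ^ 2 / 4 * β - g1 β / g β with hH1_def
  have hdH : ∀ β, HasDerivAt H (H1 β) β := by
    intro β
    have h1 : HasDerivAt (fun β : ℝ => ε ^ 2 / 8 * β ^ 2) (ε ^ 2 / 4 * β) β := by
      have := (hasDerivAt_pow 2 β).const_mul (ε ^ 2 / 8)
      exact this.congr_deriv (by norm_num; ring)
    have h2 : HasDerivAt (fun β => Real.log (g β)) (g1 β / g β) β :=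
      (hdg β).log (ne_of_gt (hgpos β))
    exact h1.sub h2
  have hdH1 : ∀ β, HasDerivAt H1 (ε ^ 2 / 4 - (g2 β * g β - g1 β * g1 β) / g β ^ 2) β := by
    intro β
    have h1 : HasDerivAt (fun β : ℝ => ε ^ 2 / 4 * β) (ε ^ 2 / 4) β := by
      simpa using (hasDerivAt_id β).const_mul (ε ^ 2 / 4)
    have h2 := (hdg1 β).div (hdg β) (ne_of_gt (hgpos β))
    exact h1.sub h2
  have hH1nonneg : ∀ β, 0 ≤ ε ^ 2 / 4 - (g2 β * g β - g1 β * g1 β) / g β ^ 2 := by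
    intro β
    have hg2le : g2 β ≤ ε ^ 2 / 4 * g β := by
      show (∑ m, ((w m * y m) * y m) * Real.exp (y m * β))
          ≤ ε ^ 2 / 4 * ∑ m, w m * Real.exp (y m * β)
      rw [Finset.mul_sum]
      apply Finset.sum_le_sum
      intro m _
      have hw0 : 0 < w m := Real.exp_pos _
      have he0 : 0 < Real.exp (y m * β) := Real.exp_pos _
      calc w m * y m * y m * Real.exp (y m * β)
          = y m ^ 2 * (w m * Real.exp (y m * β)) := by ring
        _ ≤ ε ^ 2 / 4 * (w m * Real.exp (y m * β)) :=
            mul_le_mul_of_nonneg_right (hysq m) (by positivity)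
    have hgp := hgpos β
    have h1 : (g2 β * g β - g1 β * g1 β) / g β ^ 2 ≤ ε ^ 2 / 4 := by
      rw [div_le_iff₀ (by positivity)]
      nlinarith [sq_nonneg (g1 β)]
    linarith
  have hconv : ConvexOn ℝ Set.univ H := by
    apply convexOn_of_hasDerivWithinAt2_nonneg (f' := H1)
      (f'' := fun β => ε ^ 2 / 4 - (g2 β * g β - g1 β * g1 β) / g β ^ 2) convex_univ
    · exact fun β _ => ((hdH β).continuousAt).continuousWithinAt
    · intro β _
      exact ((hdH β).hasDerivWithinAt)
    · intro β _
      exact ((hdH1 β).hasDerivWithinAt)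
    · intro β _
      exact hH1nonneg β
  have hslope := hconv.slope_mono_adjacent (Set.mem_univ (0:ℝ)) (Set.mem_univ α)
      (by norm_num : (0:ℝ) < 1) hα
  -- hslope : (H 1 - H 0) / (1 - 0) ≤ (H α - H 1) / (α - 1)
  -- rewriting the sum
  have hZ : (∑ m' : Fin M, Real.exp (c * s m')) = g 1 := by
    rw [hg_def]
    apply Finset.sum_congr rfl
    intro m _
    rw [hw_def, ← Real.exp_add]
    congr 1
    rw [hy_def]
    ring
  have hZ' : (∑ m' : Fin M, Real.exp (c * s' m')) = g 0 := by
    rw [hg_def]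
    apply Finset.sum_congr rfl
    intro m _
    rw [hw_def, ← Real.exp_add]
    congr 1
    rw [hy_def]
    ring
  have hsum : (∑ m : Fin M,
        (Real.exp (c * s m) / ∑ m' : Fin M, Real.exp (c * s m')) ^ α *
        (Real.exp (c * s' m) / ∑ m' : Fin M, Real.exp (c * s' m')) ^ (1 - α))
      = g α / (g 1 ^ α * g 0 ^ (1 - α)) := by
    rw [hZ, hZ']
    rw [hg_def]
    rw [Finset.sum_div]
    apply Finset.sum_congr rfl
    intro m _
    have hg1p : (0:ℝ) < g 1 := hgpos 1
    have hg0p : (0:ℝ) < g 0 := hgpos 0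
    rw [Real.div_rpow (Real.exp_pos _).le hg1p.le, Real.div_rpow (Real.exp_pos _).le hg0p.le]
    rw [← Real.exp_mul, ← Real.exp_mul]
    rw [div_mul_div_comm, ← Real.exp_add]
    congr 2
    rw [hw_def, hy_def, ← Real.exp_add]
    congr 1
    ring
  rw [hsum]
  have hg1p : (0:ℝ) < g 1 := hgpos 1
  have hg0p : (0:ℝ) < g 0 := hgpos 0
  have hgap : (0:ℝ) < g α := hgpos α
  have hlog : Real.log (g α / (g 1 ^ α * g 0 ^ (1 - α)))
      = Real.log (g α) - (α * Real.log (g 1) + (1 - α) * Real.log (g 0)) := by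
    rw [Real.log_div (ne_of_gt hgap) (by positivity)]
    rw [Real.log_mul (by positivity) (by positivity)]
    rw [Real.log_rpow hg1p, Real.log_rpow hg0p]
  rw [hlog]
  -- final algebra
  have hα1 : 0 < α - 1 := by linarith
  have hHα : H α = ε ^ 2 / 8 * α ^ 2 - Real.log (g α) := rfl
  have hH1' : H 1 = ε ^ 2 / 8 - Real.log (g 1) := by rw [hH_def]; norm_num
  have hH0 : H 0 = - Real.log (g 0) := by rw [hH_def]; norm_num
  rw [hHα, hH1', hH0] at hslope
  rw [div_le_div_iff₀ (by norm_num) hα1] at hslope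
  rw [div_mul_eq_mul_div, div_le_iff₀ hα1, one_mul]
  nlinarith [hslope]
end
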